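/- arXiv:1109.5510 — 4 statements merged into one kernel-verified Lean document; each statement's English description precedes it below -/
import Mathlib

section
/- Let f₁, f₂ : ℝ^N → ℝ be bounded, continuous and nonnegative, and let u₁, u₂ be the corresponding BC-solutions of the nonlocal Stefan problem. If f₁ ≤ f₂ on ℝ^N, then u₁(x,t) ≤ u₂(x,t) for all x ∈ ℝ^N and t ≥ 0. -/
open MeasureTheory Filter
open scoped Topology Pointwise

noncomputable section

abbrev Spc (N : ℕ) := EuclideanSpace ℝ (Fin N)

variable {N : ℕ}

/-- Convolution in the space variable: `(J ∗ v)(x) = ∫ J(x−y) v(y) dy`. -/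
def convol (J v : Spc N → ℝ) : Spc N → ℝ := fun x => ∫ y, J (x - y) * v y

/-- The temperature associated to an enthalpy `g`: `(g − 1)₊`. -/
def tempr (g : Spc N → ℝ) : Spc N → ℝ := fun x => max (g x - 1) 0

/-- Hypotheses on the kernel `J`: continuous, nonnegative, radially symmetric,
supported in the closed ball of radius `RJ > 0`, with unit mass. -/
structure IsKernel (J : Spc N → ℝ) (RJ : ℝ) : Prop where
  cont : Continuous J
  nonneg : ∀ x, 0 ≤ J x
  radial : ∀ x y : Spc N, ‖x‖ = ‖y‖ → J x = J y
  supp_subset : ∀ x : Spc N, RJ < ‖x‖ → J x = 0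
  radius_pos : 0 < RJ
  mass : ∫ x, J x = 1

/-- `u` is an L¹-solution of the nonlocal Stefan problem with initial datum `f`:
a continuous curve in L¹ such that `u(t) = f + ∫₀ᵗ (J∗v(s) − v(s)) ds` with `v = (u−1)₊`. -/
structure IsL1Solution (J f : Spc N → ℝ) (u : ℝ → Spc N → ℝ) : Prop where
  integrable : ∀ t, 0 ≤ t → Integrable (u t)
  contL1 : ∀ t, 0 ≤ t →
    Tendsto (fun s => ∫ x, |u s x - u t x|) (𝓝[Set.Ici (0:ℝ)] t) (𝓝 0)
  eqn : ∀ t, 0 ≤ t → ∀ᵐ x ∂(volume : Measure (Spc N)), u t x =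
    f x + ∫ s in (0:ℝ)..t, (convol J (tempr (u s)) x - tempr (u s) x)

/-- `u` is a BC-solution of the nonlocal Stefan problem with (bounded continuous) initial
datum `f`: continuous and bounded on `ℝ^N × [0,T]` for every `T > 0`, and satisfying the
integral equation pointwise, with `v = (u − 1)₊`, the convolution in the space variable. -/
structure IsBCSolution (J f : Spc N → ℝ) (u : Spc N → ℝ → ℝ) : Prop where
  cont : ContinuousOn (fun p : Spc N × ℝ => u p.1 p.2) {p : Spc N × ℝ | 0 ≤ p.2}
  bdd : ∀ T, 0 < T → ∃ C, ∀ x : Spc N, ∀ t ∈ Set.Icc (0:ℝ) T, |u x t| ≤ C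
  eqn : ∀ x : Spc N, ∀ t, 0 ≤ t → u x t =
    f x + ∫ s in (0:ℝ)..t,
      ((∫ y, J (x - y) * max (u y s - 1) 0) - max (u x s - 1) 0)

private lemma max_sub_max_le_aux (a b : ℝ) : max (a-1) 0 - max (b-1) 0 ≤ max (a - b) 0 := by
  simp only [max_def]; split_ifs <;> linarith

/-- Comparison principle for BC-solutions: if `f₁ ≤ f₂` (both bounded,
continuous, nonnegative), then the corresponding BC-solutions satisfy `u₁ ≤ u₂`. -/
theorem stefan_nonlocal_BC_comparison
    (N : ℕ) (hN : 1 ≤ N) (J : Spc N → ℝ) (RJ : ℝ) (hJ : IsKernel J RJ)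
    (f₁ f₂ : Spc N → ℝ)
    (hfc₁ : Continuous f₁) (hfb₁ : ∃ C, ∀ x, |f₁ x| ≤ C) (hf0₁ : ∀ x, 0 ≤ f₁ x)
    (hfc₂ : Continuous f₂) (hfb₂ : ∃ C, ∀ x, |f₂ x| ≤ C) (hf0₂ : ∀ x, 0 ≤ f₂ x)
    (u₁ u₂ : Spc N → ℝ → ℝ)
    (hu₁ : IsBCSolution J f₁ u₁) (hu₂ : IsBCSolution J f₂ u₂)
    (hle : ∀ x, f₁ x ≤ f₂ x) :
    ∀ x : Spc N, ∀ t, 0 ≤ t → u₁ x t ≤ u₂ x t := by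
  classical
  have hmaxcont : ∀ (g : ℝ → ℝ) (s : Set ℝ), ContinuousOn g s →
      ContinuousOn (fun a => max (g a - 1) 0) s := fun g s hg =>
    (continuous_id.max continuous_const).comp_continuousOn (hg.sub continuousOn_const)
  -- kernel facts
  have hJcompact : HasCompactSupport J := by
    apply HasCompactSupport.intro (isCompact_closedBall (0 : Spc N) RJ)
    intro x hx
    apply hJ.supp_subset
    simpa [Metric.mem_closedBall, dist_eq_norm, not_le] using hx
  have hJint : Integrable J := hJ.cont.integrable_of_hasCompactSupport hJcompact
  have hJx : ∀ x : Spc N, Integrable (fun y => J (x - y)) := fun x => hJint.comp_sub_left x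
  have hJx1 : ∀ x : Spc N, (∫ y, J (x - y)) = 1 := fun x => by
    rw [integral_sub_left_eq_self J volume x]; exact hJ.mass
  -- continuity slices
  have hcy₁ : ∀ s : ℝ, 0 ≤ s → Continuous fun y => u₁ y s := fun s hs =>
    hu₁.cont.comp_continuous (continuous_id.prodMk continuous_const) (fun y => hs)
  have hcy₂ : ∀ s : ℝ, 0 ≤ s → Continuous fun y => u₂ y s := fun s hs =>
    hu₂.cont.comp_continuous (continuous_id.prodMk continuous_const) (fun y => hs)
  have hct₁ : ∀ x, ContinuousOn (fun s => u₁ x s) (Set.Ici (0:ℝ)) := by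
    intro x
    exact hu₁.cont.comp (continuous_const.prodMk continuous_id).continuousOn
      (fun s hs => hs)
  have hct₂ : ∀ x, ContinuousOn (fun s => u₂ x s) (Set.Ici (0:ℝ)) := by
    intro x
    exact hu₂.cont.comp (continuous_const.prodMk continuous_id).continuousOn
      (fun s hs => hs)
  -- initial values
  have hu₁0 : ∀ x, u₁ x 0 = f₁ x := fun x => by simpa using hu₁.eqn x 0 le_rfl
  have hu₂0 : ∀ x, u₂ x 0 = f₂ x := fun x => by simpa using hu₂.eqn x 0 le_rfl
  intro x₀ t₀ ht₀
  set T : ℝ := t₀ + 1 with hT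
  obtain ⟨C₁, hC₁⟩ := hu₁.bdd T (by positivity)
  obtain ⟨C₂, hC₂⟩ := hu₂.bdd T (by positivity)
  have hC₁0 : 0 ≤ C₁ := le_trans (abs_nonneg _) (hC₁ x₀ 0 ⟨le_rfl, by positivity⟩)
  have hC₂0 : 0 ≤ C₂ := le_trans (abs_nonneg _) (hC₂ x₀ 0 ⟨le_rfl, by positivity⟩)
  set C : ℝ := C₁ + C₂ with hCdef
  have hC0 : 0 ≤ C := by positivity
  -- integrability in space of the convolution integrand
  have hInt : ∀ (u : Spc N → ℝ → ℝ) (D : ℝ), (∀ s : ℝ, 0 ≤ s → Continuous fun y => u y s) →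
      (∀ x, ∀ s ∈ Set.Icc (0:ℝ) T, |u x s| ≤ D) →
      ∀ x, ∀ s ∈ Set.Icc (0:ℝ) T, Integrable (fun y => J (x - y) * max (u y s - 1) 0) := by
    intro u D hcy hb x s hs
    have hmeas : AEStronglyMeasurable (fun y => max (u y s - 1) 0) volume :=
      (((hcy s hs.1).sub continuous_const).max continuous_const).aestronglyMeasurable
    have hbdd : ∃ E, ∀ y, ‖max (u y s - 1) 0‖ ≤ E := by
      refine ⟨max D 0, fun y => ?_⟩
      rw [Real.norm_eq_abs, abs_of_nonneg (le_max_right _ _)]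
      have := abs_le.1 (hb y s hs)
      exact max_le (by linarith [le_max_left D 0]) (le_max_right _ _)
    have := (hJx x).bdd_mul hmeas (Filter.Eventually.of_forall hbdd.choose_spec)
    simpa [mul_comm] using this
  have hInt₁ := hInt u₁ C₁ hcy₁ hC₁
  have hInt₂ := hInt u₂ C₂ hcy₂ hC₂
  -- continuity in time of the convolution
  have hKcont : ∀ (u : Spc N → ℝ → ℝ) (D : ℝ), (∀ s : ℝ, 0 ≤ s → Continuous fun y => u y s) →
      (∀ x, ContinuousOn (fun s => u x s) (Set.Ici (0:ℝ))) →
      (∀ x, ∀ s ∈ Set.Icc (0:ℝ) T, |u x s| ≤ D) →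
      ∀ x, ContinuousOn (fun s => ∫ y, J (x - y) * max (u y s - 1) 0) (Set.Icc (0:ℝ) T) := by
    intro u D hcy hct hb x
    apply continuousOn_of_dominated (bound := fun y => J (x - y) * max D 0)
    · intro s hs
      exact ((hJ.cont.comp (continuous_const.sub continuous_id)).mul
        (((hcy s hs.1).sub continuous_const).max continuous_const)).aestronglyMeasurable
    · intro s hs
      refine Filter.Eventually.of_forall fun y => ?_
      rw [Real.norm_eq_abs, abs_mul, abs_of_nonneg (hJ.nonneg _),
        abs_of_nonneg (le_max_right _ _)]
      have := abs_le.1 (hb y s hs)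
      exact mul_le_mul_of_nonneg_left
        (max_le (by linarith [le_max_left D 0]) (le_max_right _ _)) (hJ.nonneg _)
    · exact (hJx x).mul_const _
    · refine Filter.Eventually.of_forall fun y => ?_
      exact continuousOn_const.mul (hmaxcont _ _ ((hct y).mono Set.Icc_subset_Ici_self))
  have hKcont₁ := hKcont u₁ C₁ hcy₁ hct₁ hC₁
  have hKcont₂ := hKcont u₂ C₂ hcy₂ hct₂ hC₂
  -- the integrands of the two equations, and their difference
  set G₁ : Spc N → ℝ → ℝ :=
    fun x s => (∫ y, J (x - y) * max (u₁ y s - 1) 0) - max (u₁ x s - 1) 0 with hG₁def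
  set G₂ : Spc N → ℝ → ℝ :=
    fun x s => (∫ y, J (x - y) * max (u₂ y s - 1) 0) - max (u₂ x s - 1) 0 with hG₂def
  have hG₁cont : ∀ x, ContinuousOn (G₁ x) (Set.Icc (0:ℝ) T) := fun x =>
    (hKcont₁ x).sub (hmaxcont _ _ ((hct₁ x).mono Set.Icc_subset_Ici_self))
  have hG₂cont : ∀ x, ContinuousOn (G₂ x) (Set.Icc (0:ℝ) T) := fun x =>
    (hKcont₂ x).sub (hmaxcont _ _ ((hct₂ x).mono Set.Icc_subset_Ici_self))
  have hG₁int : ∀ x, ∀ a ∈ Set.Icc (0:ℝ) T, ∀ b ∈ Set.Icc (0:ℝ) T,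
      IntervalIntegrable (G₁ x) volume a b := fun x a ha b hb =>
    ((hG₁cont x).mono (Set.uIcc_subset_Icc ha hb)).intervalIntegrable
  have hG₂int : ∀ x, ∀ a ∈ Set.Icc (0:ℝ) T, ∀ b ∈ Set.Icc (0:ℝ) T,
      IntervalIntegrable (G₂ x) volume a b := fun x a ha b hb =>
    ((hG₂cont x).mono (Set.uIcc_subset_Icc ha hb)).intervalIntegrable
  set G : Spc N → ℝ → ℝ := fun x s => G₁ x s - G₂ x s with hGdef
  have hGint : ∀ x, ∀ a ∈ Set.Icc (0:ℝ) T, ∀ b ∈ Set.Icc (0:ℝ) T,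
      IntervalIntegrable (G x) volume a b := fun x a ha b hb =>
    (hG₁int x a ha b hb).sub (hG₂int x a ha b hb)
  have h0Icc : (0:ℝ) ∈ Set.Icc (0:ℝ) T := ⟨le_rfl, by positivity⟩
  -- the equation for the difference
  have hweq : ∀ x, ∀ t ∈ Set.Icc (0:ℝ) T, u₁ x t - u₂ x t =
      (f₁ x - f₂ x) + ∫ s in (0:ℝ)..t, G x s := by
    intro x t ht
    have e1 := hu₁.eqn x t ht.1
    have e2 := hu₂.eqn x t ht.1
    have e3 : ∫ s in (0:ℝ)..t, G x s =
        (∫ s in (0:ℝ)..t, G₁ x s) - ∫ s in (0:ℝ)..t, G₂ x s :=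
      intervalIntegral.integral_sub (hG₁int x 0 h0Icc t ht) (hG₂int x 0 h0Icc t ht)
    rw [hGdef] at e3
    simp only [hG₁def, hG₂def] at e3 ⊢
    rw [e3]
    rw [e1, e2]
    ring
  -- main induction
  have key : ∀ n : ℕ, ∀ x, ∀ t ∈ Set.Icc (0:ℝ) T,
      u₁ x t - u₂ x t ≤ C * t ^ n / n.factorial := by
    intro n
    induction n with
    | zero =>
      intro x t ht
      have b1 := abs_le.1 (hC₁ x t ht)
      have b2 := abs_le.1 (hC₂ x t ht)
      simp only [pow_zero, Nat.factorial_zero, Nat.cast_one, mul_one, div_one]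
      rw [hCdef]; linarith
    | succ n ih =>
      intro x t ht
      have hRHS0 : 0 ≤ C * t ^ (n+1) / (n+1).factorial :=
        div_nonneg (mul_nonneg hC0 (pow_nonneg ht.1 _)) (Nat.cast_nonneg _)
      by_cases hw : u₁ x t - u₂ x t ≤ 0
      · linarith
      push_neg at hw
      set S : Set ℝ := Set.Icc 0 t ∩ (fun s => u₁ x s - u₂ x s) ⁻¹' Set.Iic 0 with hSdef
      have hwcont : ContinuousOn (fun s => u₁ x s - u₂ x s) (Set.Icc 0 t) :=
        (((hct₁ x).mono (Set.Icc_subset_Ici_self)).sub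
          ((hct₂ x).mono (Set.Icc_subset_Ici_self)))
      have hSclosed : IsClosed S :=
        hwcont.preimage_isClosed_of_isClosed isClosed_Icc isClosed_Iic
      have hS0 : (0:ℝ) ∈ S := by
        refine ⟨⟨le_rfl, ht.1⟩, ?_⟩
        simp only [Set.mem_preimage, Set.mem_Iic]
        rw [hu₁0, hu₂0]
        linarith [hle x]
      have hSbdd : BddAbove S := ⟨t, fun s hs => hs.1.2⟩
      set r : ℝ := sSup S with hrdef
      have hrS : r ∈ S := hSclosed.csSup_mem ⟨0, hS0⟩ hSbdd
      have hr0 : 0 ≤ r := hrS.1.1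
      have hrt : r ≤ t := hrS.1.2
      have hwr : u₁ x r - u₂ x r ≤ 0 := hrS.2
      have hrlt : r < t := lt_of_le_of_ne hrt (by intro h; rw [h] at hwr; linarith)
      have hrIcc : r ∈ Set.Icc (0:ℝ) T := ⟨hr0, hrt.trans ht.2⟩
      have hpos : ∀ s ∈ Set.Ioc r t, 0 < u₁ x s - u₂ x s := by
        intro s hs
        by_contra h
        push_neg at h
        have hsS : s ∈ S := ⟨⟨hr0.trans hs.1.le, hs.2⟩, h⟩
        exact absurd (le_csSup hSbdd hsS) (not_le.2 hs.1)
      -- the difference vanishes at r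
      have hwr0 : u₁ x r - u₂ x r = 0 := by
        refine le_antisymm hwr ?_
        have htends : Filter.Tendsto (fun s => u₁ x s - u₂ x s) (𝓝[>] r)
            (𝓝 (u₁ x r - u₂ x r)) := by
          have hc : ContinuousWithinAt (fun s => u₁ x s - u₂ x s) (Set.Ici (0:ℝ)) r :=
            (((hct₁ x).sub (hct₂ x))) r (Set.mem_Ici.2 hr0)
          exact hc.mono_left (nhdsWithin_mono r fun s hs => le_of_lt (lt_of_le_of_lt hr0 hs))
        refine ge_of_tendsto htends ?_
        filter_upwards [Ioc_mem_nhdsGT_of_mem ⟨le_rfl, hrlt⟩] with s hs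
        exact (hpos s hs).le
      -- pointwise bound for G on [r,t]
      have hGbound : ∀ s ∈ Set.Icc r t, G x s ≤ C / n.factorial * s ^ n := by
        intro s hs
        have hs0 : (0:ℝ) ≤ s := hr0.trans hs.1
        have hsIcc : s ∈ Set.Icc (0:ℝ) T := ⟨hs0, hs.2.trans ht.2⟩
        have hM0 : 0 ≤ C / n.factorial * s ^ n :=
          mul_nonneg (div_nonneg hC0 (Nat.cast_nonneg _)) (pow_nonneg hs0 _)
        -- bound for the convolution difference
        have h1 : (∫ y, J (x - y) * max (u₁ y s - 1) 0) -
            (∫ y, J (x - y) * max (u₂ y s - 1) 0) ≤ C / n.factorial * s ^ n := by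
          rw [← integral_sub (hInt₁ x s hsIcc) (hInt₂ x s hsIcc)]
          have hptw : ∀ y, J (x - y) * max (u₁ y s - 1) 0 - J (x - y) * max (u₂ y s - 1) 0
              ≤ J (x - y) * (C / n.factorial * s ^ n) := by
            intro y
            rw [← mul_sub]
            refine mul_le_mul_of_nonneg_left ?_ (hJ.nonneg _)
            refine le_trans (max_sub_max_le_aux _ _) (max_le ?_ hM0)
            refine le_trans (ih y s hsIcc) (le_of_eq ?_)
            ring
          calc (∫ y, (J (x - y) * max (u₁ y s - 1) 0 - J (x - y) * max (u₂ y s - 1) 0))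
              ≤ ∫ y, J (x - y) * (C / n.factorial * s ^ n) :=
                integral_mono ((hInt₁ x s hsIcc).sub (hInt₂ x s hsIcc))
                  ((hJx x).mul_const _) hptw
            _ = (∫ y, J (x - y)) * (C / n.factorial * s ^ n) := integral_mul_const _ _
            _ = C / n.factorial * s ^ n := by rw [hJx1 x, one_mul]
        -- the diagonal term has a sign
        have h2 : max (u₂ x s - 1) 0 ≤ max (u₁ x s - 1) 0 := by
          rcases eq_or_lt_of_le hs.1 with he | hlt
          · have : u₁ x s = u₂ x s := by rw [← he]; linarith
            rw [this]
          · have := hpos s ⟨hlt, hs.2⟩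
            exact max_le_max (by linarith) le_rfl
        simp only [hGdef, hG₁def, hG₂def]
        linarith
      -- splitting of the integral and conclusion
      have e1 := hweq x t ht
      have e2 := hweq x r hrIcc
      have hsplit := intervalIntegral.integral_add_adjacent_intervals
        (hGint x 0 h0Icc r hrIcc) (hGint x r hrIcc t ht)
      have emain : u₁ x t - u₂ x t = ∫ s in r..t, G x s := by linarith
      have hmono : (∫ s in r..t, G x s) ≤ ∫ s in r..t, C / n.factorial * s ^ n := by
        refine intervalIntegral.integral_mono_on hrt (hGint x r hrIcc t ht) ?_ hGbound
        exact (Continuous.intervalIntegrable (continuous_const.mul (continuous_pow n)) r t)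
      have hval : (∫ s in r..t, C / n.factorial * s ^ n) =
          C / n.factorial * ((t ^ (n+1) - r ^ (n+1)) / (n+1)) := by
        rw [intervalIntegral.integral_const_mul, integral_pow]
      have hfac : (((n+1).factorial : ℕ) : ℝ) = ((n:ℝ)+1) * (n.factorial : ℝ) := by
        push_cast [Nat.factorial_succ]; ring
      have hfne : ((n.factorial : ℕ) : ℝ) ≠ 0 := by
        exact_mod_cast (Nat.factorial_pos n).ne'
      have hn1 : ((n:ℝ)+1) ≠ 0 := by positivity
      have hfaceq : C / n.factorial * ((t ^ (n+1) - r ^ (n+1)) / (n+1)) =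
          C * t ^ (n+1) / ((n+1).factorial : ℝ) - C * r ^ (n+1) / ((n+1).factorial : ℝ) := by
        rw [hfac]; field_simp
      have hrpow : 0 ≤ C * r ^ (n+1) / ((n+1).factorial : ℝ) :=
        div_nonneg (mul_nonneg hC0 (pow_nonneg hr0 _)) (Nat.cast_nonneg _)
      calc u₁ x t - u₂ x t = ∫ s in r..t, G x s := emain
        _ ≤ ∫ s in r..t, C / n.factorial * s ^ n := hmono
        _ = C / n.factorial * ((t ^ (n+1) - r ^ (n+1)) / (n+1)) := hval
        _ ≤ C * t ^ (n+1) / ((n+1).factorial : ℝ) := by rw [hfaceq]; linarith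
  -- pass to the limit
  have ht₀Icc : t₀ ∈ Set.Icc (0:ℝ) T := ⟨ht₀, by rw [hT]; linarith⟩
  have hfin : ∀ n : ℕ, u₁ x₀ t₀ - u₂ x₀ t₀ ≤ C * t₀ ^ n / n.factorial :=
    fun n => key n x₀ t₀ ht₀Icc
  have htend : Filter.Tendsto (fun n : ℕ => C * t₀ ^ n / n.factorial)
      Filter.atTop (𝓝 0) := by
    have := (FloorSemiring.tendsto_pow_div_factorial_atTop t₀).const_mul C
    simpa [mul_div_assoc] using this
  have := ge_of_tendsto htend (Filter.Eventually.of_forall hfin)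
  linarith
end
end

section
/- Let f : ℝ^N → ℝ be bounded, continuous and nonnegative, let u be the BC-solution of the nonlocal Stefan problem with initial datum f, and let v = (u − 1)₊. Then for all x ∈ ℝ^N and all 0 ≤ s ≤ t, u(x,t) ≥ e^{−(t−s)} u(x,s) and v(x,t) ≥ e^{−(t−s)} v(x,s). In particular the sets {u(·,t) > 0} and {v(·,t) > 0} are nondecreasing in t. -/
open MeasureTheory Filter
open scoped Topology Pointwise

noncomputable section

variable {N : ℕ}

lemma aux_expconv {A B s t : ℝ} (h : Real.exp s * A ≤ Real.exp t * B) :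
    Real.exp (-(t - s)) * A ≤ B := by
  have h2 := mul_le_mul_of_nonneg_left h (Real.exp_pos (-t)).le
  have e0 : (-t) + s = -(t - s) := by ring
  have e1 : Real.exp (-t) * (Real.exp s * A) = Real.exp (-(t - s)) * A := by
    rw [← mul_assoc, ← Real.exp_add, e0]
  have e2 : Real.exp (-t) * (Real.exp t * B) = B := by
    rw [← mul_assoc, ← Real.exp_add, neg_add_cancel, Real.exp_zero, one_mul]
  rw [e1, e2] at h2; exact h2

lemma aux_mono (a : ℝ) {h g : ℝ → ℝ} {s c : ℝ} (hsc : s ≤ c)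
    (hcont : ContinuousOn h (Set.Icc s c))
    (hd : ∀ r ∈ Set.Ioo s c, HasDerivAt h (g r) r)
    (hg : ∀ r ∈ Set.Ioo s c, a - h r ≤ g r) :
    Real.exp s * (h s - a) ≤ Real.exp c * (h c - a) := by
  have hmono : MonotoneOn (fun r => Real.exp r * (h r - a)) (Set.Icc s c) := by
    apply monotoneOn_of_hasDerivWithinAt_nonneg (convex_Icc s c)
      (f' := fun r => Real.exp r * (h r - a) + Real.exp r * g r)
    · exact Real.continuous_exp.continuousOn.mul (hcont.sub continuousOn_const)
    · intro r hr
      rw [interior_Icc] at hr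
      exact ((Real.hasDerivAt_exp r).mul ((hd r hr).sub_const a)).hasDerivWithinAt
    · intro r hr
      rw [interior_Icc] at hr
      have := hg r hr
      nlinarith [Real.exp_pos r]
  exact hmono (Set.left_mem_Icc.2 hsc) (Set.right_mem_Icc.2 hsc) hsc

lemma aux_nonneg {h g : ℝ → ℝ}
    (hcont : ContinuousOn h (Set.Ici 0))
    (hd : ∀ t, 0 < t → HasDerivAt h (g t) t)
    (hg : ∀ t, 0 < t → -|h t| ≤ g t) (h0 : 0 ≤ h 0) :
    ∀ t, 0 ≤ t → 0 ≤ h t := by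
  intro t₁ ht₁
  by_contra hneg
  push_neg at hneg
  have ht₁0 : 0 < t₁ := by
    rcases ht₁.lt_or_eq with h' | h'
    · exact h'
    · rw [← h'] at hneg; exact absurd h0 hneg.not_ge
  set S : Set ℝ := Set.Icc 0 t₁ ∩ h ⁻¹' Set.Ici 0 with hSdef
  have hScl : IsClosed S :=
    (hcont.mono Set.Icc_subset_Ici_self).preimage_isClosed_of_isClosed isClosed_Icc isClosed_Ici
  have h0S : (0:ℝ) ∈ S := ⟨⟨le_refl 0, ht₁⟩, h0⟩
  have hbdd : BddAbove S := ⟨t₁, fun r hr => hr.1.2⟩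
  set c := sSup S with hcdef
  have hcS : c ∈ S := hScl.csSup_mem ⟨0, h0S⟩ hbdd
  have hc0 : 0 ≤ c := hcS.1.1
  have hct₁ : c < t₁ := lt_of_le_of_ne hcS.1.2 (fun he => hneg.not_ge (he ▸ hcS.2))
  have hlt : ∀ r ∈ Set.Ioc c t₁, h r < 0 := by
    intro r hr
    by_contra hge; push_neg at hge
    have hrS : r ∈ S := ⟨⟨hc0.trans hr.1.le, hr.2⟩, hge⟩
    exact absurd (le_csSup hbdd hrS) (not_le.2 hr.1)
  have hmono : MonotoneOn (fun r => Real.exp (-r) * h r) (Set.Icc c t₁) := by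
    apply monotoneOn_of_hasDerivWithinAt_nonneg (convex_Icc c t₁)
      (f' := fun r => Real.exp (-r) * (-1) * h r + Real.exp (-r) * g r)
    · exact (Real.continuous_exp.comp continuous_neg).continuousOn.mul
        (hcont.mono (Set.Icc_subset_Ici_self.trans (Set.Ici_subset_Ici.2 hc0)))
    · intro r hr
      rw [interior_Icc] at hr
      have hr0 : 0 < r := lt_of_le_of_lt hc0 hr.1
      have hexp : HasDerivAt (fun r : ℝ => Real.exp (-r)) (Real.exp (-r) * (-1)) r := by
        simpa [Function.comp_def] using (Real.hasDerivAt_exp (-r)).comp r ((hasDerivAt_id r).neg)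
      exact (hexp.mul (hd r hr0)).hasDerivWithinAt
    · intro r hr
      rw [interior_Icc] at hr
      have hrneg : h r < 0 := hlt r ⟨hr.1, hr.2.le⟩
      have hgr := hg r (lt_of_le_of_lt hc0 hr.1)
      rw [abs_of_neg hrneg, neg_neg] at hgr
      nlinarith [Real.exp_pos (-r)]
  have h1 := hmono (Set.left_mem_Icc.2 hct₁.le) (Set.right_mem_Icc.2 hct₁.le) hct₁.le
  have hφc : 0 ≤ Real.exp (-c) * h c := mul_nonneg (Real.exp_pos _).le hcS.2
  have h1' : Real.exp (-c) * h c ≤ Real.exp (-t₁) * h t₁ := h1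
  have h2' : Real.exp (-t₁) * h t₁ < 0 := mul_neg_of_pos_of_neg (Real.exp_pos _) hneg
  linarith

lemma aux_stay {h g : ℝ → ℝ} {s t : ℝ} (hst : s ≤ t)
    (hcont : ContinuousOn h (Set.Icc s t))
    (hd : ∀ r ∈ Set.Ioo s t, HasDerivAt h (g r) r)
    (hg : ∀ r ∈ Set.Ioo s t, -(max (h r - 1) 0) ≤ g r)
    (hs1 : 1 < h s) :
    Real.exp (-(t - s)) * (h s - 1) ≤ h t - 1 := by
  have key : ∀ r ∈ Set.Ioo s t, 1 ≤ h r → 1 - h r ≤ g r := by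
    intro r hr h1
    have := hg r hr
    rw [max_eq_left (by linarith)] at this
    linarith
  by_cases hall : ∀ r ∈ Set.Ioo s t, 1 ≤ h r
  · exact aux_expconv (aux_mono 1 hst hcont hd (fun r hr => key r hr (hall r hr)))
  · exfalso
    push_neg at hall
    obtain ⟨r₀, hr₀, hr₀1⟩ := hall
    set S : Set ℝ := Set.Icc s t ∩ h ⁻¹' Set.Iic 1 with hSdef
    have hScl : IsClosed S := hcont.preimage_isClosed_of_isClosed isClosed_Icc isClosed_Iic
    have hr₀S : r₀ ∈ S := ⟨⟨hr₀.1.le, hr₀.2.le⟩, hr₀1.le⟩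
    have hbdd : BddBelow S := ⟨s, fun r hr => hr.1.1⟩
    set c := sInf S with hcdef
    have hcS : c ∈ S := hScl.csInf_mem ⟨r₀, hr₀S⟩ hbdd
    have hsc : s < c := by
      rcases hcS.1.1.lt_or_eq with h' | h'
      · exact h'
      · rw [← h'] at hcS; exact absurd hcS.2 (not_le.2 hs1)
    have hmid : ∀ r ∈ Set.Ioo s c, 1 ≤ h r := by
      intro r hr
      by_contra hlt1; push_neg at hlt1
      have hrS : r ∈ S := ⟨⟨hr.1.le, hr.2.le.trans hcS.1.2⟩, hlt1.le⟩
      exact absurd (csInf_le hbdd hrS) (not_le.2 hr.2)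
    have hmono := aux_mono 1 hsc.le
      (hcont.mono (Set.Icc_subset_Icc_right hcS.1.2))
      (fun r hr => hd r ⟨hr.1, lt_of_lt_of_le hr.2 hcS.1.2⟩)
      (fun r hr => key r ⟨hr.1, lt_of_lt_of_le hr.2 hcS.1.2⟩ (hmid r hr))
    have h1 : 0 < Real.exp s * (h s - 1) := mul_pos (Real.exp_pos s) (by linarith)
    have hc1 : h c ≤ 1 := hcS.2
    have h2 : Real.exp c * (h c - 1) ≤ 0 :=
      mul_nonpos_of_nonneg_of_nonpos (Real.exp_pos c).le (by linarith)
    linarith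

/-- The right-hand side of the nonlocal Stefan equation at a fixed point `x`. -/
def stefanG (J : Spc N → ℝ) (u : Spc N → ℝ → ℝ) (x : Spc N) (s : ℝ) : ℝ :=
  (∫ y, J (x - y) * max (u y s - 1) 0) - max (u x s - 1) 0

/-- Retention property for BC-solutions: for `0 ≤ s ≤ t`,
`u(x,t) ≥ e^{−(t−s)} u(x,s)` and `v(x,t) ≥ e^{−(t−s)} v(x,s)` where `v = (u−1)₊`;
in particular the positivity sets of `u` and of `v` are nondecreasing in time. -/
theorem stefan_nonlocal_BC_retention
    (N : ℕ) (hN : 1 ≤ N) (J : Spc N → ℝ) (RJ : ℝ) (hJ : IsKernel J RJ)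
    (f : Spc N → ℝ) (hfc : Continuous f) (hfb : ∃ C, ∀ x, |f x| ≤ C)
    (hf0 : ∀ x, 0 ≤ f x)
    (u : Spc N → ℝ → ℝ) (hu : IsBCSolution J f u) :
    (∀ x : Spc N, ∀ s t : ℝ, 0 ≤ s → s ≤ t →
      Real.exp (-(t - s)) * u x s ≤ u x t) ∧
    (∀ x : Spc N, ∀ s t : ℝ, 0 ≤ s → s ≤ t →
      Real.exp (-(t - s)) * max (u x s - 1) 0 ≤ max (u x t - 1) 0) ∧
    (∀ s t : ℝ, 0 ≤ s → s ≤ t →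
      {x : Spc N | 0 < u x s} ⊆ {x : Spc N | 0 < u x t}) ∧
    (∀ s t : ℝ, 0 ≤ s → s ≤ t →
      {x : Spc N | 0 < max (u x s - 1) 0} ⊆ {x : Spc N | 0 < max (u x t - 1) 0}) := by
  
  -- integrability of the translated kernel
  have hJx : ∀ x : Spc N, Integrable (fun y => J (x - y)) := by
    intro x
    have hcont : Continuous (fun y : Spc N => J (x - y)) :=
      hJ.cont.comp (continuous_const.sub continuous_id)
    have hcs : HasCompactSupport (fun y : Spc N => J (x - y)) := by
      apply HasCompactSupport.intro (isCompact_closedBall x RJ)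
      intro y hy
      apply hJ.supp_subset
      have : ¬ dist y x ≤ RJ := by simpa [Metric.mem_closedBall] using hy
      rw [← dist_eq_norm, dist_comm]
      exact not_le.1 this
    exact hcont.integrable_of_hasCompactSupport hcs
  -- continuity in space for fixed nonneg time
  have huy : ∀ t : ℝ, 0 ≤ t → Continuous (fun y => u y t) := by
    intro t ht
    rw [← continuousOn_univ]
    exact hu.cont.comp
      ((continuous_id.prodMk continuous_const).continuousOn)
      (fun y _ => ht)
  -- continuity in time for fixed space point
  have hut : ∀ y : Spc N, ContinuousOn (fun t => u y t) (Set.Ici 0) :=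
    fun y => hu.cont.comp
      ((continuous_const.prodMk continuous_id).continuousOn)
      (fun t ht => ht)
  -- lower bound on G
  have hGnn : ∀ x : Spc N, ∀ s : ℝ, -(max (u x s - 1) 0) ≤ stefanG J u x s := by
    intro x s
    have h0 : 0 ≤ ∫ y, J (x - y) * max (u y s - 1) 0 :=
      integral_nonneg fun y => mul_nonneg (hJ.nonneg _) (le_max_right _ _)
    unfold stefanG; linarith
  -- continuity of G on [0, ∞)
  have hGcont : ∀ x : Spc N, ContinuousOn (stefanG J u x) (Set.Ici 0) := by
    intro x
    have hIcont : ContinuousOn (fun t => ∫ y, J (x - y) * max (u y t - 1) 0) (Set.Ici 0) := by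
      intro t₀ ht₀
      have ht₀' : (0:ℝ) ≤ t₀ := ht₀
      obtain ⟨C, hC⟩ := hu.bdd (t₀ + 1) (by linarith)
      have hC0 : 0 ≤ C := (abs_nonneg (u x 0)).trans (hC x 0 ⟨le_refl 0, by linarith⟩)
      apply continuousWithinAt_of_dominated (bound := fun y => J (x - y) * C)
      · filter_upwards [self_mem_nhdsWithin] with t ht
        exact ((hJ.cont.comp (continuous_const.sub continuous_id)).mul
          (((huy t ht).sub continuous_const).sup continuous_const)).aestronglyMeasurable
      · have hmem : Set.Ici (0:ℝ) ∩ Set.Iio (t₀ + 1) ∈ 𝓝[Set.Ici (0:ℝ)] t₀ :=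
          Filter.inter_mem self_mem_nhdsWithin
            (nhdsWithin_le_nhds (Iio_mem_nhds (by linarith)))
        filter_upwards [hmem] with t ht
        apply Filter.Eventually.of_forall
        intro y
        have hb : |u y t| ≤ C := hC y t ⟨ht.1, (le_of_lt ht.2)⟩
        have hVle : max (u y t - 1) 0 ≤ C := by
          apply max_le _ hC0
          have := le_abs_self (u y t)
          linarith
        rw [Real.norm_eq_abs, abs_of_nonneg (mul_nonneg (hJ.nonneg _) (le_max_right _ _))]
        exact mul_le_mul_of_nonneg_left hVle (hJ.nonneg _)
      · exact (hJx x).mul_const C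
      · apply Filter.Eventually.of_forall
        intro y
        exact continuousWithinAt_const.mul
          ((((hut y).continuousWithinAt ht₀).sub continuousWithinAt_const).sup
            continuousWithinAt_const)
    exact hIcont.sub (((hut x).sub continuousOn_const).sup continuousOn_const)
  -- the integral equation
  have hEq : ∀ x : Spc N, ∀ t ∈ Set.Ici (0:ℝ),
      u x t = f x + ∫ s in (0:ℝ)..t, stefanG J u x s :=
    fun x t ht => hu.eqn x t ht
  -- differentiability
  have hderiv : ∀ x : Spc N, ∀ t : ℝ, 0 < t →
      HasDerivAt (fun t => u x t) (stefanG J u x t) t := by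
    intro x t₀ ht₀
    have hci : IntervalIntegrable (stefanG J u x) volume 0 t₀ := by
      apply ContinuousOn.intervalIntegrable
      rw [Set.uIcc_of_le ht₀.le]
      exact (hGcont x).mono Set.Icc_subset_Ici_self
    have hmeas : StronglyMeasurableAtFilter (stefanG J u x) (𝓝 t₀) :=
      ⟨Set.Ioi 0, Ioi_mem_nhds ht₀,
        ((hGcont x).mono Set.Ioi_subset_Ici_self).aestronglyMeasurable measurableSet_Ioi⟩
    have hca : ContinuousAt (stefanG J u x) t₀ :=
      (hGcont x).continuousAt (Ici_mem_nhds ht₀)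
    have H := (intervalIntegral.integral_hasDerivAt_right hci hmeas hca).const_add (f x)
    apply H.congr_of_eventuallyEq
    filter_upwards [Ici_mem_nhds ht₀] with r hr
    exact hEq x r hr
  -- nonnegativity of u x
  have hu0 : ∀ x : Spc N, u x 0 = f x := by
    intro x
    have := hEq x 0 (Set.mem_Ici.2 (le_refl 0))
    simpa using this
  have hnn : ∀ x : Spc N, ∀ t, 0 ≤ t → 0 ≤ u x t := by
    intro x
    apply aux_nonneg (hut x) (hderiv x) _ (by rw [hu0 x]; exact hf0 x)
    intro t ht
    refine le_trans ?_ (hGnn x t)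
    have : max (u x t - 1) 0 ≤ |u x t| := by
      apply max_le (by linarith [le_abs_self (u x t)]) (abs_nonneg _)
    linarith
  have main : ∀ x : Spc N, ∀ s t : ℝ, 0 ≤ s → s ≤ t →
      Real.exp (-(t - s)) * u x s ≤ u x t ∧
      Real.exp (-(t - s)) * max (u x s - 1) 0 ≤ max (u x t - 1) 0 := by
    intro x s t hs hst
    have hIcc : Set.Icc s t ⊆ Set.Ici (0:ℝ) := fun r hr => hs.trans hr.1
    have hcst : ContinuousOn (fun r => u x r) (Set.Icc s t) := (hut x).mono hIcc
    have hdst : ∀ r ∈ Set.Ioo s t, HasDerivAt (fun r => u x r) (stefanG J u x r) r :=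
      fun r hr => hderiv x r (lt_of_le_of_lt hs hr.1)
    constructor
    · have hg0 : ∀ r ∈ Set.Ioo s t, 0 - u x r ≤ stefanG J u x r := by
        intro r hr
        have h0r : 0 ≤ r := hs.trans hr.1.le
        have hur : 0 ≤ u x r := hnn x r h0r
        have hmax : max (u x r - 1) 0 ≤ u x r := max_le (by linarith) hur
        have := hGnn x r
        linarith
      have h2 := aux_expconv (aux_mono 0 hst hcst hdst hg0)
      simpa using h2
    · rcases le_or_gt (u x s) 1 with hle | hgt
      · rw [max_eq_right (by linarith), mul_zero]
        exact le_max_right _ _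
      · rw [max_eq_left (by linarith)]
        have hgG : ∀ r ∈ Set.Ioo s t, -(max (u x r - 1) 0) ≤ stefanG J u x r :=
          fun r _ => hGnn x r
        exact (aux_stay hst hcst hdst hgG hgt).trans (le_max_left _ _)
  refine ⟨fun x s t hs hst => (main x s t hs hst).1,
          fun x s t hs hst => (main x s t hs hst).2, ?_, ?_⟩
  · intro s t hs hst x hx
    exact lt_of_lt_of_le (mul_pos (Real.exp_pos _) hx) (main x s t hs hst).1
  · intro s t hs hst x hx
    exact lt_of_lt_of_le (mul_pos (Real.exp_pos _) hx) (main x s t hs hst).2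
end
end

section
/- Let w ∈ L¹(ℝ^N) satisfy w ≥ 0 a.e. and w ≤ J∗w a.e. Then w = 0 a.e. -/
open MeasureTheory Filter
open scoped Topology Pointwise

noncomputable section

variable {N : ℕ}

open Convolution

lemma convol_eq_convolution (J v : Spc N → ℝ) (x : Spc N) :
    convol J v x = (J ⋆[ContinuousLinearMap.mul ℝ ℝ, volume] v) x := by
  unfold convol convolution
  simp only [ContinuousLinearMap.mul_apply']
  rw [← integral_sub_left_eq_self (fun t => J t * v (x - t)) volume x]
  congr 1; ext y; rw [sub_sub_cancel]

/-- Liouville-type lemma for `J`-subharmonic functions: if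
`w ∈ L¹(ℝ^N)`, `w ≥ 0` a.e. and `w ≤ J∗w` a.e., then `w = 0` a.e. -/
theorem nonlocal_liouville
    (N : ℕ) (hN : 1 ≤ N) (J : Spc N → ℝ) (RJ : ℝ) (hJ : IsKernel J RJ)
    (w : Spc N → ℝ) (hw : Integrable w)
    (hw0 : ∀ᵐ x ∂(volume : Measure (Spc N)), 0 ≤ w x)
    (hsub : ∀ᵐ x ∂(volume : Measure (Spc N)), w x ≤ convol J w x) :
    w =ᵐ[(volume : Measure (Spc N))] (0 : Spc N → ℝ) := by
  classical
  have hJc := hJ.cont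
  have hJsupp : HasCompactSupport J :=
    HasCompactSupport.intro (isCompact_closedBall (0:Spc N) RJ)
      (fun x hx => hJ.supp_subset x
        (by simpa [Metric.mem_closedBall, dist_zero_right, not_le] using hx))
  have hJi : Integrable J := hJc.integrable_of_hasCompactSupport hJsupp
  set L := ContinuousLinearMap.mul ℝ ℝ with hL
  set g : Spc N → ℝ := J ⋆[L, volume] w with hgdef0
  have hgdef : ∀ x, g x = ∫ t, J t * w (x - t) := by
    intro x
    simp only [hgdef0, convolution, hL, ContinuousLinearMap.mul_apply']
  have hconvw : ∀ x, convol J w x = g x := fun x => convol_eq_convolution J w x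
  have hgc : Continuous g := hJsupp.continuous_convolution_left L hJc hw.locallyIntegrable
  have hgi : Integrable g := hJi.integrable_convolution L hw
  have hint : ∫ x, g x = ∫ x, w x := by
    rw [hgdef0, integral_convolution L hJi hw, hJ.mass]
    simp [hL]
  -- w = g a.e.
  have hsub' : ∀ᵐ x ∂(volume : Measure (Spc N)), w x ≤ g x :=
    hsub.mono fun x hx => by rwa [hconvw x] at hx
  have hwg : ∀ᵐ x ∂(volume : Measure (Spc N)), w x = g x := by
    have hnn : 0 ≤ᵐ[volume] fun x => g x - w x :=
      hsub'.mono fun x hx => sub_nonneg.2 hx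
    have hdiff : Integrable (fun x => g x - w x) := hgi.sub hw
    have hzero : ∫ x, (g x - w x) = 0 := by
      rw [integral_sub hgi hw, hint, sub_self]
    have := (integral_eq_zero_iff_of_nonneg_ae hnn hdiff).mp hzero
    exact this.mono fun x hx => by
      have : g x - w x = 0 := hx
      linarith
  -- g nonnegative everywhere
  have hgnn : ∀ x, 0 ≤ g x := by
    intro x
    rw [hgdef x]
    apply integral_nonneg_of_ae
    have h0 : ∀ᵐ t ∂(volume : Measure (Spc N)), 0 ≤ w (x - t) :=
      (quasiMeasurePreserving_sub_left_of_right_invariant volume x).ae hw0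
    exact h0.mono fun t ht => mul_nonneg (hJ.nonneg t) ht
  -- g = J * g pointwise (in the convol form)
  have hgid : ∀ x, g x = ∫ y, J (x - y) * g y := by
    intro x
    have h1 : convol J g x = (J ⋆[L, volume] g) x := convol_eq_convolution J g x
    have h2 : (J ⋆[L, volume] g) x = ∫ t, J t * g (x - t) := by
      simp only [convolution, hL, ContinuousLinearMap.mul_apply']
    have h3 : ∀ᵐ t ∂(volume : Measure (Spc N)), w (x - t) = g (x - t) :=
      (quasiMeasurePreserving_sub_left_of_right_invariant volume x).ae hwg
    have h4 : (∫ t, J t * w (x - t)) = ∫ t, J t * g (x - t) :=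
      integral_congr_ae (h3.mono fun t ht => by simp only [ht])
    show g x = convol J g x
    rw [h1, h2, ← h4, hgdef x]
  -- tail integral
  set T : ℝ → ℝ := fun r => ∫ x in (Metric.closedBall (0:Spc N) r)ᶜ, g x with hTdef
  have hT : Tendsto T atTop (𝓝 0) := by
    have hmeas : ∀ r : ℝ, MeasurableSet ((Metric.closedBall (0:Spc N) r)ᶜ) :=
      fun r => measurableSet_closedBall.compl
    have hanti : Antitone (fun r : ℝ => (Metric.closedBall (0:Spc N) r)ᶜ) :=
      fun r r' h => Set.compl_subset_compl.mpr (Metric.closedBall_subset_closedBall h)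
    have := tendsto_setIntegral_of_antitone (f := g) (μ := volume) hmeas hanti
      ⟨0, hgi.integrableOn⟩
    have hempty : (⋂ r : ℝ, (Metric.closedBall (0:Spc N) r)ᶜ) = ∅ := by
      ext x
      simp only [Set.mem_iInter, Set.mem_compl_iff, Metric.mem_closedBall,
        dist_zero_right, Set.mem_empty_iff_false, iff_false, not_forall, not_not]
      exact ⟨‖x‖, le_refl _⟩
    rw [hempty] at this
    simpa using this
  -- bound on J
  obtain ⟨xC, hxC⟩ := hJc.exists_forall_ge_of_hasCompactSupport hJsupp
  set C : ℝ := J xC with hCdef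
  have hCnn : 0 ≤ C := le_trans (hJ.nonneg 0) (hxC 0)
  -- pointwise bound via the tail
  have hbound : ∀ x : Spc N, g x ≤ C * T (‖x‖ - RJ - 1) := by
    intro x
    set r : ℝ := ‖x‖ - RJ - 1 with hrdef
    have key : ∀ y, J (x - y) * g y ≤
        ((Metric.closedBall (0:Spc N) r)ᶜ).indicator (fun y => C * g y) y := by
      intro y
      by_cases hy : y ∈ (Metric.closedBall (0:Spc N) r)ᶜ
      · rw [Set.indicator_of_mem hy]
        exact mul_le_mul_of_nonneg_right (hxC _) (hgnn y)
      · rw [Set.indicator_of_notMem hy]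
        have hy' : ‖y‖ ≤ r := by
          have := not_not.mp (fun h => hy h)
          simpa [Metric.mem_closedBall, dist_zero_right] using this
        have hnorm : RJ < ‖x - y‖ := by
          have h1 : ‖x‖ - ‖y‖ ≤ ‖x - y‖ := norm_sub_norm_le x y
          have : RJ + 1 ≤ ‖x‖ - ‖y‖ := by
            rw [hrdef] at hy'; linarith
          linarith
        rw [hJ.supp_subset _ hnorm, zero_mul]
    have hint1 : Integrable (fun y => J (x - y) * g y) := by
      apply hgi.bdd_mul (c := C)
      · exact (hJc.comp (continuous_const.sub continuous_id)).aestronglyMeasurable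
      · exact Filter.Eventually.of_forall (fun y => by
          rw [Real.norm_eq_abs, abs_of_nonneg (hJ.nonneg _)]; exact hxC _)
    have hint2 : Integrable (((Metric.closedBall (0:Spc N) r)ᶜ).indicator (fun y => C * g y)) :=
      (hgi.const_mul C).indicator measurableSet_closedBall.compl
    calc g x = ∫ y, J (x - y) * g y := hgid x
      _ ≤ ∫ y, ((Metric.closedBall (0:Spc N) r)ᶜ).indicator (fun y => C * g y) y :=
          integral_mono hint1 hint2 key
      _ = ∫ y in (Metric.closedBall (0:Spc N) r)ᶜ, C * g y :=
          integral_indicator measurableSet_closedBall.compl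
      _ = C * T r := by rw [hTdef]; exact integral_const_mul C g
  -- Main claim: g vanishes identically
  have hgz : ∀ x, g x = 0 := by
    by_contra hcon
    push_neg at hcon
    obtain ⟨z, hz0⟩ := hcon
    have hz : 0 < g z := lt_of_le_of_ne (hgnn z) (Ne.symm hz0)
    -- tail eventually small
    have hCT : Tendsto (fun r => C * T r) atTop (𝓝 0) := by
      simpa using hT.const_mul C
    obtain ⟨r₀, hr₀⟩ := eventually_atTop.mp (hCT.eventually (gt_mem_nhds hz))
    have hout : ∀ x : Spc N, r₀ + RJ + 1 ≤ ‖x‖ → g x < g z := by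
      intro x hx
      exact lt_of_le_of_lt (hbound x) (hr₀ _ (by linarith))
    -- global maximum
    have hev : ∀ᶠ x in cocompact (Spc N), g x ≤ g z := by
      have hmem : (Metric.closedBall (0:Spc N) (r₀ + RJ + 1))ᶜ ∈ cocompact (Spc N) :=
        Filter.mem_cocompact.2 ⟨_, isCompact_closedBall _ _, subset_rfl⟩
      refine Filter.eventually_of_mem hmem fun x hx => ?_
      simp only [Set.mem_compl_iff, Metric.mem_closedBall, dist_zero_right, not_le] at hx
      exact le_of_lt (hout x hx.le)
    obtain ⟨x₀, hx₀⟩ := hgc.exists_forall_ge' z hev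
    set M : ℝ := g x₀ with hMdef
    have hM : 0 < M := lt_of_lt_of_le hz (hx₀ z)
    -- propagation of the maximum
    have step : ∀ x : Spc N, g x = M → ∀ t : Spc N, J t ≠ 0 → g (x - t) = M := by
      intro x hx t ht
      have hfun : ∀ y, 0 ≤ J (x - y) * (M - g y) :=
        fun y => mul_nonneg (hJ.nonneg _) (sub_nonneg.2 (hx₀ y))
      have hconti : Continuous (fun y : Spc N => J (x - y) * (M - g y)) :=
        (hJc.comp (continuous_const.sub continuous_id)).mul (continuous_const.sub hgc)
      have hJx : Integrable (fun y : Spc N => J (x - y)) := by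
        have : Integrable (fun y : Spc N => J (x - y)) volume := by
          have := hJi.comp_sub_left x
          simpa using this
        exact this
      have hint2 : Integrable (fun y => J (x - y) * g y) := by
        apply hgi.bdd_mul (c := C)
        · exact (hJc.comp (continuous_const.sub continuous_id)).aestronglyMeasurable
        · exact Filter.Eventually.of_forall (fun y => by
            rw [Real.norm_eq_abs, abs_of_nonneg (hJ.nonneg _)]; exact hxC _)
      have hint1 : Integrable (fun y : Spc N => J (x - y) * M) := hJx.mul_const M
      have hinti : Integrable (fun y : Spc N => J (x - y) * (M - g y)) := by
        have := hint1.sub hint2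
        simpa [mul_sub, Pi.sub_def] using this
      have e1 : ∫ y, J (x - y) * M = M := by
        rw [integral_mul_const, integral_sub_left_eq_self J volume x, hJ.mass, one_mul]
      have e2 : ∫ y, J (x - y) * g y = M := by rw [← hgid x, ← hx]
      have hint0 : ∫ y, J (x - y) * (M - g y) = 0 := by
        have : ∫ y, J (x - y) * (M - g y) = (∫ y, J (x - y) * M) - ∫ y, J (x - y) * g y := by
          rw [← integral_sub hint1 hint2]
          congr 1; ext y; ring
        rw [this, e1, e2, sub_self]
      have hae : (fun y : Spc N => J (x - y) * (M - g y)) =ᵐ[volume] 0 :=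
        (integral_eq_zero_iff_of_nonneg hfun hinti).mp hint0
      have hall : (fun y : Spc N => J (x - y) * (M - g y)) = 0 :=
        (Continuous.ae_eq_iff_eq volume hconti continuous_const).mp hae
      have := congrFun hall (x - t)
      simp only [sub_sub_cancel, Pi.zero_apply] at this
      rcases mul_eq_zero.mp this with h | h
      · exact absurd h ht
      · linarith [sub_eq_zero.mp h]
    -- a nonzero direction u with J u ≠ 0
    obtain ⟨u₀, hu₀⟩ : ∃ u : Spc N, J u ≠ 0 := by
      by_contra h
      push_neg at h
      have : ∫ x, J x = 0 := by
        have : J = fun _ => (0:ℝ) := funext h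
        rw [this]; simp
      rw [hJ.mass] at this; norm_num at this
    obtain ⟨u, hu, hJu⟩ : ∃ u : Spc N, u ≠ 0 ∧ J u ≠ 0 := by
      by_cases h0 : u₀ = 0
      · have hu₀' : 0 < J u₀ := lt_of_le_of_ne (hJ.nonneg u₀) (Ne.symm hu₀)
        have hopen : IsOpen {y : Spc N | 0 < J y} := isOpen_lt continuous_const hJc
        obtain ⟨δ, hδ, hball⟩ := Metric.isOpen_iff.mp hopen u₀ hu₀'
        set i : Fin N := ⟨0, hN⟩ with hi
        set e : Spc N := EuclideanSpace.single i (1:ℝ) with he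
        have hnorme : ‖e‖ = 1 := by
          rw [he, EuclideanSpace.norm_single]; norm_num
        have hene : e ≠ 0 := by
          intro h; rw [h, norm_zero] at hnorme; norm_num at hnorme
        refine ⟨(δ/2) • e, ?_, ?_⟩
        · exact smul_ne_zero (by positivity) hene
        · have hmem : (δ/2) • e ∈ Metric.ball u₀ δ := by
            rw [h0, Metric.mem_ball, dist_zero_right, norm_smul, hnorme]
            simp only [mul_one, Real.norm_eq_abs]
            rw [abs_of_pos (by positivity)]
            linarith
          exact ne_of_gt (hball hmem)
      · exact ⟨u₀, h0, hu₀⟩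
    have hunorm : 0 < ‖u‖ := norm_pos_iff.mpr hu
    -- iterate the propagation
    have hk : ∀ k : ℕ, g (x₀ - (k : ℕ) • u) = M := by
      intro k
      induction k with
      | zero => simp [hMdef]
      | succ n ih =>
        have := step _ ih u hJu
        have heq : x₀ - (n : ℕ) • u - u = x₀ - ((n+1) : ℕ) • u := by
          rw [succ_nsmul, sub_sub]
        rwa [heq] at this
    -- pick k far out
    obtain ⟨k, hkk⟩ := exists_nat_ge ((r₀ + RJ + 1 + ‖x₀‖) / ‖u‖)
    have hfar : r₀ + RJ + 1 ≤ ‖x₀ - (k : ℕ) • u‖ := by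
      have h1 : ‖(k : ℕ) • u‖ - ‖x₀‖ ≤ ‖x₀ - (k : ℕ) • u‖ := by
        have := norm_sub_norm_le ((k : ℕ) • u) x₀
        calc ‖(k : ℕ) • u‖ - ‖x₀‖ ≤ ‖(k : ℕ) • u - x₀‖ := this
          _ = ‖x₀ - (k : ℕ) • u‖ := by rw [norm_sub_rev]
      have h2 : (k : ℝ) * ‖u‖ = ‖(k : ℕ) • u‖ := by
        rw [(Nat.cast_smul_eq_nsmul ℝ k u).symm, norm_smul, Real.norm_natCast]
      have h3 : r₀ + RJ + 1 + ‖x₀‖ ≤ (k : ℝ) * ‖u‖ := by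
        rw [div_le_iff₀ hunorm] at hkk
        linarith
      linarith
    have := hout _ hfar
    rw [hk k] at this
    exact absurd (hx₀ z) (not_le.mpr this)
  -- conclude
  refine hwg.mono fun x hx => ?_
  rw [hx, hgz x]; rfl
end
end

section
/- Let f ∈ L¹(ℝ^N) be nonnegative a.e. Then the nonlocal obstacle problem with data f has at most one solution: if w₁, w₂ ∈ L¹(ℝ^N) both satisfy wᵢ ≥ 0 a.e., 0 ≤ f + J∗wᵢ − wᵢ ≤ 1 a.e., and (f + J∗wᵢ − wᵢ − 1)wᵢ = 0 a.e. (i = 1,2), then w₁ = w₂ a.e. -/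
open MeasureTheory Filter
open scoped Topology Pointwise

noncomputable section

variable {N : ℕ}

/-- `w` solves the nonlocal obstacle problem with data `f`:
`w ≥ 0`, `0 ≤ f + J∗w − w ≤ 1`, and `(f + J∗w − w − 1) w = 0`, all a.e. -/
structure IsObstacleSol (J f w : Spc N → ℝ) : Prop where
  integrable : Integrable w
  nonneg : ∀ᵐ x ∂(volume : Measure (Spc N)), 0 ≤ w x
  lower : ∀ᵐ x ∂(volume : Measure (Spc N)), 0 ≤ f x + convol J w x - w x
  upper : ∀ᵐ x ∂(volume : Measure (Spc N)), f x + convol J w x - w x ≤ 1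
  compl : ∀ᵐ x ∂(volume : Measure (Spc N)), (f x + convol J w x - w x - 1) * w x = 0

open scoped Convolution

namespace NonlocalObstacleAux

variable {J : Spc N → ℝ} {RJ : ℝ}

lemma hcs (hJ : IsKernel J RJ) : HasCompactSupport J :=
  HasCompactSupport.intro (isCompact_closedBall 0 RJ) fun x hx =>
    hJ.supp_subset x (by simpa [Metric.mem_closedBall, dist_zero_right, not_le] using hx)

lemma Jint (hJ : IsKernel J RJ) : Integrable J :=
  hJ.cont.integrable_of_hasCompactSupport (hcs hJ)

lemma integrand_int (hJ : IsKernel J RJ) {v : Spc N → ℝ} (hv : Integrable v) (x : Spc N) :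
    Integrable (fun y => J (x - y) * v y) := by
  obtain ⟨C, hC⟩ := hJ.cont.bounded_above_of_compact_support (hcs hJ)
  exact hv.bdd_mul ((hJ.cont.comp (continuous_const.sub continuous_id)).aestronglyMeasurable)
    (Filter.Eventually.of_forall fun y => hC _)

lemma convol_eq (J v : Spc N → ℝ) (x : Spc N) :
    convol J v x = (J ⋆[ContinuousLinearMap.mul ℝ ℝ, volume] v) x := by
  rw [convol, convolution]
  simp only [ContinuousLinearMap.mul_apply']
  rw [← MeasureTheory.integral_sub_left_eq_self (fun t => J t * v (x - t)) volume x]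
  congr 1; ext y; simp

lemma convol_int (hJ : IsKernel J RJ) {v : Spc N → ℝ} (hv : Integrable v) :
    Integrable (convol J v) :=
  (funext (convol_eq J v) : convol J v = _) ▸
    ((Jint hJ).integrable_convolution (ContinuousLinearMap.mul ℝ ℝ) hv)

lemma integral_convol (hJ : IsKernel J RJ) {v : Spc N → ℝ} (hv : Integrable v) :
    ∫ x, convol J v x = ∫ x, v x := by
  simp only [convol_eq J v]
  rw [integral_convolution (ContinuousLinearMap.mul ℝ ℝ) (Jint hJ) hv]
  simp [hJ.mass]

lemma convol_cont (hJ : IsKernel J RJ) {v : Spc N → ℝ} (hv : Integrable v) :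
    Continuous (convol J v) := by
  have h := (hcs hJ).continuous_convolution_left (ContinuousLinearMap.mul ℝ ℝ) hJ.cont
    hv.locallyIntegrable
  rwa [(funext (convol_eq J v) : convol J v = _)]

lemma convol_nonneg (hJ : IsKernel J RJ) {v : Spc N → ℝ} (hv0 : ∀ y, 0 ≤ v y) (x : Spc N) :
    0 ≤ convol J v x :=
  integral_nonneg fun y => mul_nonneg (hJ.nonneg _) (hv0 y)

lemma fixed_point (hN : 1 ≤ N) (hJ : IsKernel J RJ) {g : Spc N → ℝ}
    (hgInt : Integrable g) (hg0 : ∀ x, 0 ≤ g x)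
    (hfix : g =ᵐ[(volume : Measure (Spc N))] convol J g) :
    ∀ᵐ x ∂(volume : Measure (Spc N)), g x = 0 := by
  set h : Spc N → ℝ := convol J g with hh
  have hInt : Integrable h := convol_int hJ hgInt
  have hcont : Continuous h := convol_cont hJ hgInt
  have hnn : ∀ x, 0 ≤ h x := convol_nonneg hJ hg0
  have hfixh : ∀ x, convol J h x = h x := by
    intro x
    have hae : (fun y => J (x - y) * h y) =ᵐ[(volume : Measure (Spc N))]
        fun y => J (x - y) * g y := by
      filter_upwards [hfix] with y hy
      exact congrArg (fun t => J (x - y) * t) hy.symm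
    calc convol J h x = ∫ y, J (x - y) * g y := integral_congr_ae hae
      _ = h x := rfl
  obtain ⟨C, hC⟩ := hJ.cont.bounded_above_of_compact_support (hcs hJ)
  have hC0 : 0 ≤ C := le_trans (norm_nonneg _) (hC 0)
  -- decay of h at infinity
  have decay : ∀ ε > 0, ∃ R : ℝ, 0 ≤ R ∧ ∀ x : Spc N, R < ‖x‖ → h x < ε := by
    intro ε hε
    have hmono : Monotone (fun n : ℕ => Metric.closedBall (0 : Spc N) n) := fun m n hmn =>
      Metric.closedBall_subset_closedBall (by exact_mod_cast hmn)
    have hunion : (⋃ n : ℕ, Metric.closedBall (0 : Spc N) n) = Set.univ := by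
      ext x
      simp only [Set.mem_iUnion, Metric.mem_closedBall, dist_zero_right, Set.mem_univ, iff_true]
      exact exists_nat_ge ‖x‖
    have htend := tendsto_setIntegral_of_monotone
      (fun n : ℕ => (measurableSet_closedBall : MeasurableSet (Metric.closedBall (0:Spc N) n)))
      hmono (by rw [hunion]; exact hgInt.integrableOn)
    rw [hunion, Measure.restrict_univ] at htend
    have hpos : 0 < ε / (C + 1) := by positivity
    obtain ⟨n, hn⟩ := (Metric.tendsto_atTop.1 htend _ hpos) |>.imp (fun n hn => hn n le_rfl)
    refine ⟨(n : ℝ) + RJ, by have h1 := hJ.radius_pos; have h2 : (0:ℝ) ≤ n := Nat.cast_nonneg n; linarith, ?_⟩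
    intro x hx
    set B : Set (Spc N) := Metric.closedBall (0 : Spc N) n with hB
    have hb : ∀ y, J (x - y) * g y ≤ C * Set.indicator Bᶜ g y := by
      intro y
      by_cases hy : y ∈ B
      · have hyn : ‖y‖ ≤ (n : ℝ) := by simpa [hB, Metric.mem_closedBall, dist_zero_right] using hy
        have hfar : RJ < ‖x - y‖ := by
          have h1 := norm_sub_norm_le x y
          linarith
        rw [hJ.supp_subset _ hfar, zero_mul, Set.indicator_of_notMem (Set.not_notMem.2 hy),
          mul_zero]
      · rw [Set.indicator_of_mem (Set.mem_compl hy)]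
        have hJle : J (x - y) ≤ C := (le_abs_self _).trans (by simpa using hC (x - y))
        exact mul_le_mul_of_nonneg_right hJle (hg0 y)
    have hiRHS : Integrable (fun y => C * Set.indicator Bᶜ g y) :=
      (hgInt.indicator measurableSet_closedBall.compl).const_mul C
    have hint : h x ≤ C * ∫ y in Bᶜ, g y := by
      calc h x = ∫ y, J (x - y) * g y := rfl
        _ ≤ ∫ y, C * Set.indicator Bᶜ g y := integral_mono (integrand_int hJ hgInt x) hiRHS hb
        _ = C * ∫ y, Set.indicator Bᶜ g y := integral_const_mul _ _
        _ = C * ∫ y in Bᶜ, g y := by rw [integral_indicator measurableSet_closedBall.compl]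
    have htail0 : 0 ≤ ∫ y in Bᶜ, g y :=
      setIntegral_nonneg measurableSet_closedBall.compl fun y _ => hg0 y
    have hsum := integral_add_compl (measurableSet_closedBall :
      MeasurableSet B) hgInt
    have habs := abs_lt.1 (by simpa [Real.dist_eq] using hn)
    have htail : ∫ y in Bᶜ, g y < ε / (C + 1) := by
      have h1 := habs.1
      have h2 := habs.2
      linarith
    have hfin : (C + 1) * (ε / (C + 1)) = ε := by field_simp
    calc h x ≤ C * ∫ y in Bᶜ, g y := hint
      _ ≤ (C + 1) * ∫ y in Bᶜ, g y := by nlinarith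
      _ < (C + 1) * (ε / (C + 1)) := by
          exact mul_lt_mul_of_pos_left htail (by positivity)
      _ = ε := hfin
  -- it suffices to show h vanishes identically
  suffices hzero : ∀ x, h x = 0 by
    filter_upwards [hfix] with x hx
    rw [hx]; exact hzero x
  by_contra hcon
  push_neg at hcon
  obtain ⟨x₀, hx₀⟩ := hcon
  have hx₀pos : 0 < h x₀ := (hnn x₀).lt_of_ne (Ne.symm hx₀)
  obtain ⟨R, hR0, hR⟩ := decay (h x₀) hx₀pos
  set R' : ℝ := max R ‖x₀‖ with hR'
  have hx₀mem : x₀ ∈ Metric.closedBall (0 : Spc N) R' := by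
    rw [Metric.mem_closedBall, dist_zero_right]; exact le_max_right _ _
  obtain ⟨z, hzmem, hz⟩ := (isCompact_closedBall (0 : Spc N) R').exists_isMaxOn
    ⟨x₀, hx₀mem⟩ hcont.continuousOn
  have hglob : ∀ x, h x ≤ h z := by
    intro x
    by_cases hx : ‖x‖ ≤ R'
    · exact isMaxOn_iff.1 hz x (by simpa [Metric.mem_closedBall, dist_zero_right] using hx)
    · have hlt : h x < h x₀ := hR x (lt_of_le_of_lt (le_max_left _ _) (lt_of_not_ge hx))
      exact hlt.le.trans (isMaxOn_iff.1 hz x₀ hx₀mem)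
  set M : ℝ := h z with hM'
  have hM : 0 < M := lt_of_lt_of_le hx₀pos (hglob x₀)
  -- maximum principle step
  have step : ∀ a : Spc N, h a = M → ∀ y, J (a - y) ≠ 0 → h y = M := by
    intro a ha y hy
    have int1 : Integrable (fun y : Spc N => J (a - y) * M) :=
      ((Jint hJ).comp_sub_left a).mul_const M
    have int2 : Integrable (fun y : Spc N => J (a - y) * h y) := integrand_int hJ hInt a
    have hfe : (fun y : Spc N => J (a - y) * (M - h y))
        = fun y => J (a - y) * M - J (a - y) * h y := by funext y; ring
    have hii : Integrable (fun y : Spc N => J (a - y) * (M - h y)) := by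
      rw [hfe]; exact int1.sub int2
    have hint0 : ∫ y, J (a - y) * (M - h y) = 0 := by
      rw [hfe, integral_sub int1 int2, integral_mul_const,
        MeasureTheory.integral_sub_left_eq_self J volume a, hJ.mass,
        show (∫ y, J (a - y) * h y) = h a from hfixh a, ha]
      ring
    have hci : Continuous fun y : Spc N => J (a - y) * (M - h y) :=
      (hJ.cont.comp (continuous_const.sub continuous_id)).mul (continuous_const.sub hcont)
    have haezero := (integral_eq_zero_iff_of_nonneg
      (fun y => mul_nonneg (hJ.nonneg _) (sub_nonneg.2 (hglob y))) hii).1 hint0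
    have hzero : (fun y : Spc N => J (a - y) * (M - h y)) = fun _ => 0 :=
      (hci.ae_eq_iff_eq volume continuous_const).1 haezero
    rcases mul_eq_zero.1 (congrFun hzero y) with h' | h'
    · exact absurd h' hy
    · linarith [sub_eq_zero.1 h']
  -- the set where J is nonzero contains a ball
  obtain ⟨v, hv⟩ : ∃ v : Spc N, J v ≠ 0 := by
    by_contra hcon'
    push_neg at hcon'
    have : ∫ x, J x = 0 := by
      rw [show J = fun _ => (0:ℝ) from funext hcon']; simp
    rw [hJ.mass] at this; norm_num at this
  obtain ⟨ε, hε, hball⟩ : ∃ ε > 0, Metric.ball v ε ⊆ {z : Spc N | J z ≠ 0} := by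
    have hopen : IsOpen {z : Spc N | J z ≠ 0} := isOpen_compl_singleton.preimage hJ.cont
    exact Metric.isOpen_iff.1 hopen v hv
  have hsymmJ : ∀ z : Spc N, J (-z) = J z := fun z => hJ.radial _ _ (norm_neg z)
  -- the set {h = M} is clopen and nonempty
  set E : Set (Spc N) := {x | h x = M} with hE
  have hEne : E.Nonempty := ⟨z, rfl⟩
  have hEclosed : IsClosed E := isClosed_eq hcont continuous_const
  have hEopen : IsOpen E := by
    rw [Metric.isOpen_iff]
    intro x hx
    refine ⟨2 * ε, by positivity, ?_⟩
    intro u hu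
    have hwnorm : ‖u - x‖ < 2 * ε := by rwa [← dist_eq_norm]
    set w : Spc N := u - x with hw
    set c : Spc N := (1/2 : ℝ) • w with hcdef
    have hcnorm : ‖c‖ < ε := by
      rw [hcdef, norm_smul]
      simp only [norm_div, Real.norm_ofNat, norm_one]
      nlinarith [norm_nonneg w]
    have hcc : c + c = w := by
      rw [hcdef, ← add_smul]; norm_num
    have step1 : h (x + v + c) = M := by
      apply step x hx
      have harg : x - (x + v + c) = -(v + c) := by abel
      rw [harg, hsymmJ]
      apply hball
      simp only [Metric.mem_ball, dist_eq_norm, add_sub_cancel_left]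
      exact hcnorm
    have step2 : h u = M := by
      apply step _ step1 u
      have hu_eq : u = x + (c + c) := by rw [hcc, hw]; abel
      have harg : (x + v + c) - u = v - c := by rw [hu_eq]; abel
      rw [harg]
      apply hball
      simp only [Metric.mem_ball, dist_eq_norm, sub_sub_cancel_left, norm_neg]
      exact hcnorm
    exact step2
  have hEuniv : E = Set.univ := IsClopen.eq_univ ⟨hEclosed, hEopen⟩ hEne
  have hconst : h = fun _ => M := funext fun x => Set.eq_univ_iff_forall.1 hEuniv x
  haveI : Nontrivial (Spc N) := by
    refine ⟨0, EuclideanSpace.single (⟨0, hN⟩ : Fin N) (1 : ℝ), fun hcon' => ?_⟩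
    simpa [EuclideanSpace.single_apply] using congrArg (fun v => v ⟨0, hN⟩) hcon'
  have huniv : (volume : Measure (Spc N)) Set.univ = ⊤ :=
    measure_univ_of_isAddLeftInvariant volume
  have hic : Integrable (fun _ : Spc N => M) := hconst ▸ hInt
  rcases integrable_const_iff.1 hic with h' | h'
  · exact absurd h' (ne_of_gt hM)
  · haveI := h'; exact absurd (measure_lt_top (volume : Measure (Spc N)) Set.univ) (by rw [huniv]; exact lt_irrefl _)


lemma one_sided (hN : 1 ≤ N) (hJ : IsKernel J RJ) (f w₁ w₂ : Spc N → ℝ)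
    (hw₁ : IsObstacleSol J f w₁) (hw₂ : IsObstacleSol J f w₂) :
    ∀ᵐ x ∂(volume : Measure (Spc N)), w₁ x ≤ w₂ x := by
  set g : Spc N → ℝ := fun x => max (w₁ x - w₂ x) 0 with hgdef
  have hg0 : ∀ x, 0 ≤ g x := fun x => le_max_right _ _
  have hgInt : Integrable g := (hw₁.integrable.sub hw₂.integrable).pos_part
  have hd : ∀ x, w₁ x - w₂ x ≤ g x := fun x => le_max_left _ _
  have key : ∀ᵐ x ∂(volume : Measure (Spc N)), g x ≤ convol J g x := by
    filter_upwards [hw₂.nonneg, hw₁.compl, hw₂.upper] with x h2 hc hu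
    rcases le_or_gt (w₁ x) (w₂ x) with hle | hlt
    · have hg : g x = 0 := max_eq_right (by linarith)
      rw [hg]; exact convol_nonneg hJ hg0 x
    · have h1 : f x + convol J w₁ x - w₁ x - 1 = 0 := by
        rcases mul_eq_zero.1 hc with h' | h'
        · exact h'
        · exact absurd h' (ne_of_gt (h2.trans_lt hlt))
      have hsub : convol J w₁ x - convol J w₂ x = ∫ y, J (x - y) * (w₁ y - w₂ y) := by
        rw [convol, convol, ← integral_sub (integrand_int hJ hw₁.integrable x)
          (integrand_int hJ hw₂.integrable x)]
        congr 1; funext y; ring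
      have hmono : ∫ y, J (x - y) * (w₁ y - w₂ y) ≤ convol J g x := by
        refine integral_mono ?_ (integrand_int hJ hgInt x) ?_
        · have hi := (integrand_int hJ hw₁.integrable x).sub (integrand_int hJ hw₂.integrable x)
          refine hi.congr (Filter.Eventually.of_forall fun y => by simp; ring)
        · intro y
          exact mul_le_mul_of_nonneg_left (hd y) (hJ.nonneg _)
      have hgx : g x = w₁ x - w₂ x := max_eq_left (by linarith)
      linarith
  have heq : ∫ x, (convol J g x - g x) = 0 := by
    rw [integral_sub (convol_int hJ hgInt) hgInt, integral_convol hJ hgInt, sub_self]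
  have hae : (fun x => convol J g x - g x) =ᵐ[(volume : Measure (Spc N))] 0 := by
    refine (integral_eq_zero_iff_of_nonneg_ae ?_ ((convol_int hJ hgInt).sub hgInt)).1 heq
    filter_upwards [key] with x hx
    simpa using sub_nonneg.2 hx
  have hfix : g =ᵐ[(volume : Measure (Spc N))] convol J g := by
    filter_upwards [hae] with x hx
    have hx' : convol J g x - g x = 0 := hx
    linarith
  have hz := fixed_point hN hJ hgInt hg0 hfix
  filter_upwards [hz] with x hx
  have h' := hd x
  rw [hx] at h'
  linarith

end NonlocalObstacleAux

/-- Uniqueness for the nonlocal obstacle problem: for nonnegative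
`f ∈ L¹(ℝ^N)`, any two solutions coincide a.e. -/
theorem nonlocal_obstacle_uniqueness
    (N : ℕ) (hN : 1 ≤ N) (J : Spc N → ℝ) (RJ : ℝ) (hJ : IsKernel J RJ)
    (f : Spc N → ℝ) (hf : Integrable f)
    (hf0 : ∀ᵐ x ∂(volume : Measure (Spc N)), 0 ≤ f x)
    (w₁ w₂ : Spc N → ℝ)
    (hw₁ : IsObstacleSol J f w₁) (hw₂ : IsObstacleSol J f w₂) :
    w₁ =ᵐ[(volume : Measure (Spc N))] w₂ := by
  have h12 := NonlocalObstacleAux.one_sided hN hJ f w₁ w₂ hw₁ hw₂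
  have h21 := NonlocalObstacleAux.one_sided hN hJ f w₂ w₁ hw₂ hw₁
  filter_upwards [h12, h21] with x h1 h2
  exact le_antisymm h1 h2
end
end
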